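/- The Robinson polynomial R(x₁,x₂,x₃) = x₁⁶ + x₂⁶ + x₃⁶ − (x₁⁴x₂² + x₁²x₂⁴ + x₁⁴x₃² + x₁²x₃⁴ + x₂⁴x₃² + x₂²x₃⁴) + 3x₁²x₂²x₃² satisfies R(x) ≥ 0 for all x ∈ ℝ³, but there do not exist finitely many polynomials q₁, …, q_m ∈ ℝ[x₁,x₂,x₃] with R = q₁² + ⋯ + q_m². -/

import Mathlib

open MvPolynomial

/-- The Robinson polynomial
`x₁⁶ + x₂⁶ + x₃⁶ − (x₁⁴x₂² + x₁²x₂⁴ + x₁⁴x₃² + x₁²x₃⁴ + x₂⁴x₃² + x₂²x₃⁴) + 3x₁²x₂²x₃²`. -/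
noncomputable def robinson : MvPolynomial (Fin 3) ℝ :=
  X 0 ^ 6 + X 1 ^ 6 + X 2 ^ 6 -
    (X 0 ^ 4 * X 1 ^ 2 + X 0 ^ 2 * X 1 ^ 4 + X 0 ^ 4 * X 2 ^ 2 + X 0 ^ 2 * X 2 ^ 4 +
      X 1 ^ 4 * X 2 ^ 2 + X 1 ^ 2 * X 2 ^ 4) +
    3 * (X 0 ^ 2 * X 1 ^ 2 * X 2 ^ 2)

/-! ### Auxiliary machinery -/

/-- Exponent vector `(i, j, k)` as a finitely supported function on `Fin 3`. -/
noncomputable def e (i j k : ℕ) : Fin 3 →₀ ℕ :=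
  Finsupp.single 0 i + Finsupp.single 1 j + Finsupp.single 2 k

@[simp] lemma e_apply0 (i j k : ℕ) : e i j k 0 = i := by
  simp [e, Finsupp.single_apply]
@[simp] lemma e_apply1 (i j k : ℕ) : e i j k 1 = j := by
  simp [e, Finsupp.single_apply]
@[simp] lemma e_apply2 (i j k : ℕ) : e i j k 2 = k := by
  simp [e, Finsupp.single_apply]

lemma eq_e (β : Fin 3 →₀ ℕ) : β = e (β 0) (β 1) (β 2) := by
  ext x; fin_cases x <;> simp

@[simp] lemma e_eq_iff {i j k i' j' k' : ℕ} :
    e i j k = e i' j' k' ↔ (i = i' ∧ j = j' ∧ k = k') := by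
  constructor
  · intro h
    exact ⟨by simpa using DFunLike.congr_fun h 0,
      by simpa using DFunLike.congr_fun h 1,
      by simpa using DFunLike.congr_fun h 2⟩
  · rintro ⟨rfl, rfl, rfl⟩; rfl

lemma degree_e (i j k : ℕ) : (e i j k).degree = i + j + k := by
  have : (e i j k).degree = ∑ x : Fin 3, e i j k x := by
    rw [Finsupp.degree]
    exact Finset.sum_subset (Finset.subset_univ _)
      (by intro x _ hx; simpa using Finsupp.notMem_support_iff.mp hx)
  rw [this, Fin.sum_univ_three]; simp

lemma degree3 (β : Fin 3 →₀ ℕ) : β.degree = β 0 + β 1 + β 2 := by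
  conv_lhs => rw [eq_e β]
  exact degree_e _ _ _

@[simp] lemma e_prod_pow {R : Type*} [CommMonoid R] (x : Fin 3 → R) (i j k : ℕ) :
    (e i j k).prod (fun n m => x n ^ m) = x 0 ^ i * x 1 ^ j * x 2 ^ k := by
  rw [Finsupp.prod_fintype _ _ (fun n => pow_zero _), Fin.prod_univ_three]
  simp

/-- A sum of squares of real multivariate polynomials which is zero has all terms zero. -/
lemma sos_eq_zero {m : ℕ} (f : Fin m → MvPolynomial (Fin 3) ℝ)
    (h : ∑ i, f i ^ 2 = 0) : ∀ i, f i = 0 := by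
  intro i
  apply MvPolynomial.funext
  intro x
  have hx : ∑ j, (MvPolynomial.eval x (f j)) ^ 2 = 0 := by
    have := congrArg (MvPolynomial.eval x) h
    simpa [map_sum] using this
  have := (Finset.sum_eq_zero_iff_of_nonneg
    (fun j _ => sq_nonneg (MvPolynomial.eval x (f j)))).mp hx i (Finset.mem_univ i)
  simpa [pow_eq_zero_iff] using this

/-- The algebra map separating homogeneous components: `X i ↦ X i * t`. -/
noncomputable def Phi : MvPolynomial (Fin 3) ℝ →ₐ[ℝ] Polynomial (MvPolynomial (Fin 3) ℝ) :=
  MvPolynomial.aeval (fun i => Polynomial.C (X i) * Polynomial.X)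

lemma Phi_monomial (α : Fin 3 →₀ ℕ) (c : ℝ) :
    Phi (monomial α c) = Polynomial.C (monomial α c) * Polynomial.X ^ α.degree := by
  rw [Phi, MvPolynomial.aeval_monomial, MvPolynomial.monomial_eq]
  have h1 : (α.prod fun n e => (Polynomial.C (X n : MvPolynomial (Fin 3) ℝ) * Polynomial.X) ^ e)
      = Polynomial.C (α.prod fun n e => (X n : MvPolynomial (Fin 3) ℝ) ^ e) *
        Polynomial.X ^ α.degree := by
    rw [Finsupp.prod]
    simp only [mul_pow, ← Polynomial.C_pow]
    rw [Finset.prod_mul_distrib, ← map_prod, Finset.prod_pow_eq_pow_sum]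
    rfl
  rw [h1, map_mul]
  have : (algebraMap ℝ (Polynomial (MvPolynomial (Fin 3) ℝ))) c
      = Polynomial.C (MvPolynomial.C c) := rfl
  rw [this]
  ring

lemma Phi_coeff_homogeneous (q : MvPolynomial (Fin 3) ℝ) (n : ℕ) :
    ((Phi q).coeff n).IsHomogeneous n := by
  conv_lhs => rw [q.as_sum]
  rw [map_sum, Polynomial.finset_sum_coeff]
  apply IsHomogeneous.sum q.support (fun α => ((Phi (monomial α (coeff α q))).coeff n)) n
  intro α _
  rw [Phi_monomial, Polynomial.coeff_C_mul, Polynomial.coeff_X_pow]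
  by_cases h : n = α.degree
  · subst h
    rw [if_pos rfl, mul_one]
    exact isHomogeneous_monomial _ rfl
  · simp only [if_neg h, mul_zero]
    exact isHomogeneous_zero _ _ _

lemma Phi_robinson : Phi robinson = Polynomial.C robinson * Polynomial.X ^ 6 := by
  simp only [robinson, Phi, map_add, map_sub, map_mul, map_pow, map_ofNat,
    MvPolynomial.aeval_X]
  ring

/-- A homogeneous cubic vanishing at the ten zeros of the Robinson polynomial is zero. -/
lemma cubic_eq_zero (p : MvPolynomial (Fin 3) ℝ) (hp : p.IsHomogeneous 3)
    (E1 : eval ![1,1,0] p = 0) (E2 : eval ![1,-1,0] p = 0)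
    (E3 : eval ![1,0,1] p = 0) (E4 : eval ![1,0,-1] p = 0)
    (E5 : eval ![0,1,1] p = 0) (E6 : eval ![0,1,-1] p = 0)
    (E7 : eval ![1,1,1] p = 0) (E8 : eval ![1,1,-1] p = 0)
    (E9 : eval ![1,-1,1] p = 0) (E10 : eval ![-1,1,1] p = 0) : p = 0 := by
  have hrep : p = monomial (e 3 0 0) (coeff (e 3 0 0) p) + monomial (e 0 3 0) (coeff (e 0 3 0) p)
      + monomial (e 0 0 3) (coeff (e 0 0 3) p) + monomial (e 2 1 0) (coeff (e 2 1 0) p)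
      + monomial (e 1 2 0) (coeff (e 1 2 0) p) + monomial (e 2 0 1) (coeff (e 2 0 1) p)
      + monomial (e 1 0 2) (coeff (e 1 0 2) p) + monomial (e 0 2 1) (coeff (e 0 2 1) p)
      + monomial (e 0 1 2) (coeff (e 0 1 2) p) + monomial (e 1 1 1) (coeff (e 1 1 1) p) := by
    ext β
    simp only [coeff_add, coeff_monomial]
    by_cases hs : β 0 + β 1 + β 2 = 3
    · have hβ : β = e (β 0) (β 1) (β 2) := eq_e β
      obtain ⟨n0, hn0⟩ : ∃ n, β 0 = n := ⟨_, rfl⟩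
      obtain ⟨n1, hn1⟩ : ∃ n, β 1 = n := ⟨_, rfl⟩
      obtain ⟨n2, hn2⟩ : ∃ n, β 2 = n := ⟨_, rfl⟩
      rw [hn0, hn1, hn2] at hβ hs
      rw [hβ]
      have hb0 : n0 ≤ 3 := by omega
      have hb1 : n1 ≤ 3 := by omega
      have hb2 : n2 ≤ 3 := by omega
      clear hn0 hn1 hn2 hβ
      interval_cases n0 <;> interval_cases n1 <;> interval_cases n2 <;>
        first
          | omega
          | norm_num [e_eq_iff]
    · have hne : ∀ u v w : ℕ, u + v + w = 3 → ¬ (e u v w = β) := by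
        intro u v w huvw hEq
        apply hs
        have h3 : (e u v w).degree = 3 := by rw [degree_e, huvw]
        rw [hEq, degree3] at h3
        exact h3
      rw [if_neg (hne 3 0 0 (by norm_num)), if_neg (hne 0 3 0 (by norm_num)),
        if_neg (hne 0 0 3 (by norm_num)), if_neg (hne 2 1 0 (by norm_num)),
        if_neg (hne 1 2 0 (by norm_num)), if_neg (hne 2 0 1 (by norm_num)),
        if_neg (hne 1 0 2 (by norm_num)), if_neg (hne 0 2 1 (by norm_num)),
        if_neg (hne 0 1 2 (by norm_num)), if_neg (hne 1 1 1 (by norm_num))]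
      have : β.degree ≠ 3 := by rw [degree3]; exact hs
      rw [hp.coeff_eq_zero this]
      norm_num
  rw [hrep] at E1 E2 E3 E4 E5 E6 E7 E8 E9 E10
  simp only [map_add, eval_monomial, e_prod_pow, Matrix.cons_val_zero, Matrix.cons_val_one,
    Matrix.head_cons, Matrix.cons_val_two, Matrix.tail_cons] at E1 E2 E3 E4 E5 E6 E7 E8 E9 E10
  norm_num at E1 E2 E3 E4 E5 E6 E7 E8 E9 E10
  have za : coeff (e 3 0 0) p = 0 := by linarith
  have zb : coeff (e 0 3 0) p = 0 := by linarith
  have zc : coeff (e 0 0 3) p = 0 := by linarith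
  have zd : coeff (e 2 1 0) p = 0 := by linarith
  have ze : coeff (e 1 2 0) p = 0 := by linarith
  have zf : coeff (e 2 0 1) p = 0 := by linarith
  have zg : coeff (e 1 0 2) p = 0 := by linarith
  have zh : coeff (e 0 2 1) p = 0 := by linarith
  have zi : coeff (e 0 1 2) p = 0 := by linarith
  have zj : coeff (e 1 1 1) p = 0 := by linarith
  rw [hrep, za, zb, zc, zd, ze, zf, zg, zh, zi, zj]
  simp

/-! ### Schur's inequality -/

lemma schur_sorted (a b c : ℝ) (hc : 0 ≤ c) (hcb : c ≤ b) (hba : b ≤ a) :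
    0 ≤ a*(a-b)*(a-c) + b*(b-a)*(b-c) + c*(c-a)*(c-b) := by
  nlinarith [mul_nonneg (sq_nonneg (a-b)) (show (0:ℝ) ≤ a + b - c by linarith),
    mul_nonneg hc (mul_nonneg (show (0:ℝ) ≤ a - c by linarith)
      (show (0:ℝ) ≤ b - c by linarith))]

lemma schur (a b c : ℝ) (ha : 0 ≤ a) (hb : 0 ≤ b) (hc : 0 ≤ c) :
    0 ≤ a*(a-b)*(a-c) + b*(b-a)*(b-c) + c*(c-a)*(c-b) := by
  rcases le_total a b with h1 | h1 <;> rcases le_total b c with h2 | h2 <;>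
    rcases le_total a c with h3 | h3
  · nlinarith [schur_sorted c b a ha h1 h2]
  · nlinarith [schur_sorted c b a ha h1 h2]
  · nlinarith [schur_sorted b c a ha h3 h2]
  · nlinarith [schur_sorted b a c hc h3 h1]
  · nlinarith [schur_sorted c a b hb h1 h3]
  · nlinarith [schur_sorted a c b hb h2 h3]
  · nlinarith [schur_sorted a b c hc h2 h1]
  · nlinarith [schur_sorted a b c hc h2 h1]

/-- The Robinson polynomial is nonnegative on all of `ℝ³` but is not a sum of squares of
polynomials. -/
theorem robinson_nonneg_not_sos :
    (∀ x : Fin 3 → ℝ, 0 ≤ eval x robinson) ∧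
    ¬∃ (m : ℕ) (q : Fin m → MvPolynomial (Fin 3) ℝ), robinson = ∑ i, q i ^ 2 := by
  constructor
  · intro x
    have h := schur ((x 0)^2) ((x 1)^2) ((x 2)^2) (sq_nonneg _) (sq_nonneg _) (sq_nonneg _)
    have heq : eval x robinson = (x 0)^2*((x 0)^2-(x 1)^2)*((x 0)^2-(x 2)^2)
        + (x 1)^2*((x 1)^2-(x 0)^2)*((x 1)^2-(x 2)^2)
        + (x 2)^2*((x 2)^2-(x 0)^2)*((x 2)^2-(x 1)^2) := by
      simp only [robinson, map_add, map_sub, map_mul, map_pow, map_ofNat, eval_X]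
      ring
    rw [heq]
    exact h
  · rintro ⟨m, q, hq⟩
    have hPhi : Polynomial.C robinson * Polynomial.X ^ 6 = ∑ i, (Phi (q i))^2 := by
      rw [← Phi_robinson, hq, map_sum]
      simp only [map_pow]
    -- degree bound
    have hdeg : ∀ i, (Phi (q i)).natDegree ≤ 3 := by
      by_contra hcon
      push_neg at hcon
      obtain ⟨i₀, hi₀⟩ := hcon
      set D := Finset.univ.sup (fun i => (Phi (q i)).natDegree) with hD
      have hle : ∀ i, (Phi (q i)).natDegree ≤ D := fun i => Finset.le_sup (f := fun i => (Phi (q i)).natDegree) (Finset.mem_univ i)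
      have hD4 : 4 ≤ D := le_trans hi₀ (hle i₀)
      obtain ⟨i₁, -, hi₁⟩ := Finset.exists_mem_eq_sup Finset.univ ⟨i₀, Finset.mem_univ i₀⟩
        (fun i => (Phi (q i)).natDegree)
      rw [← hD] at hi₁
      have hz : ∑ i, ((Phi (q i)).coeff D)^2 = 0 := by
        have hcc := congrArg (fun P => Polynomial.coeff P (D + D)) hPhi
        rw [Polynomial.coeff_C_mul, Polynomial.coeff_X_pow, if_neg (by omega), mul_zero,
          Polynomial.finset_sum_coeff] at hcc
        rw [← hcc.symm]
        apply Finset.sum_congr rfl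
        intro i _
        rw [sq, sq, Polynomial.coeff_mul_add_eq_of_natDegree_le (hle i) (hle i)]
      have hzero := sos_eq_zero _ hz i₁
      have : Phi (q i₁) = 0 := by
        rw [← Polynomial.leadingCoeff_eq_zero, Polynomial.leadingCoeff, ← hi₁]
        exact hzero
      rw [this] at hi₁
      simp at hi₁
      omega
    -- robinson as a sum of squares of homogeneous cubics
    have hsum : robinson = ∑ i, ((Phi (q i)).coeff 3)^2 := by
      have hcc := congrArg (fun P => Polynomial.coeff P 6) hPhi
      rw [Polynomial.coeff_C_mul, Polynomial.coeff_X_pow, if_pos rfl, mul_one,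
        Polynomial.finset_sum_coeff] at hcc
      rw [hcc]
      apply Finset.sum_congr rfl
      intro i _
      rw [sq, show (6:ℕ) = 3 + 3 from rfl,
        Polynomial.coeff_mul_add_eq_of_natDegree_le (hdeg i) (hdeg i), ← sq]
    -- each cubic vanishes at the ten zeros
    have hz10 : ∀ (x : Fin 3 → ℝ), eval x robinson = 0 →
        ∀ i, eval x ((Phi (q i)).coeff 3) = 0 := by
      intro x hx i
      have hsx : ∑ j, (eval x ((Phi (q j)).coeff 3))^2 = 0 := by
        have := congrArg (eval x) hsum
        rw [map_sum] at this
        simp only [map_pow] at this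
        rw [hx] at this
        exact this.symm
      have := (Finset.sum_eq_zero_iff_of_nonneg
        (fun j _ => sq_nonneg (eval x ((Phi (q j)).coeff 3)))).mp hsx i (Finset.mem_univ i)
      simpa [pow_eq_zero_iff] using this
    have hall : ∀ i, (Phi (q i)).coeff 3 = 0 := by
      intro i
      apply cubic_eq_zero _ (Phi_coeff_homogeneous _ 3) <;>
        apply hz10 _ (by norm_num [robinson, Matrix.cons_val_two, Matrix.tail_cons, Matrix.head_cons])
    have hrob0 : robinson = 0 := by
      rw [hsum]
      simp [hall]
    have h1 : eval ![1,0,0] robinson = 1 := by norm_num [robinson, Matrix.cons_val_two, Matrix.tail_cons, Matrix.head_cons]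
    rw [hrob0] at h1
    simp at h1
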